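/- arXiv:1805.11068 — 3 statements merged into one kernel-verified Lean document; each statement's English description precedes it below -/
import Mathlib

section
/- Suppose g : ℝ → ℝ is differentiable at 1 with g'(1) ≠ 0, and m_ε : [0,1] → ℝ satisfies g(m_ε(x)) = εV(x) + g(1) − εV(x₀) for all x ∈ [0,1], where m_ε → 1 uniformly as ε → 0⁺. Then for every sufficiently small ε > 0 and all x ∈ [0,1], |m_ε(x) − 1| ≤ (2(max V − min V)/|g'(1)|) · ε. -/
open Set Filter

theorem stmt_6 (g : ℝ → ℝ) (hg : DifferentiableAt ℝ g 1) (hg' : deriv g 1 ≠ 0)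
    (V : ℝ → ℝ) (hV : ContinuousOn V (Set.Icc 0 1))
    (x₀ : ℝ) (hx₀ : x₀ ∈ Set.Icc (0 : ℝ) 1)
    (m : ℝ → ℝ → ℝ)
    (heq : ∀ ε > (0 : ℝ), ∀ x ∈ Set.Icc (0 : ℝ) 1,
      g (m ε x) = ε * V x + g 1 - ε * V x₀)
    (hunif : TendstoUniformlyOn (fun ε => m ε) (fun _ => 1)
      (nhdsWithin 0 (Set.Ioi 0)) (Set.Icc 0 1)) :
    ∃ ε₀ > (0 : ℝ), ∀ ε : ℝ, 0 < ε → ε < ε₀ → ∀ x ∈ Set.Icc (0 : ℝ) 1,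
      |m ε x - 1| ≤ 2 * (sSup (V '' Set.Icc (0 : ℝ) 1) - sInf (V '' Set.Icc (0 : ℝ) 1))
        / |deriv g 1| * ε := by
  set L := deriv g 1 with hL
  have hLpos : 0 < |L| := abs_pos.mpr hg'
  -- little-o estimate
  have hd : HasDerivAt g L 1 := hg.hasDerivAt
  have ho := hd.isLittleO
  have h2 := (ho.def (by positivity : (0:ℝ) < |L|/2))
  rw [Metric.eventually_nhds_iff] at h2
  obtain ⟨δ, hδpos, hδ⟩ := h2
  -- uniform convergence: eventually within δ
  have hu := Metric.tendstoUniformlyOn_iff.mp hunif δ hδpos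
  rw [eventually_iff, Metric.mem_nhdsWithin_iff] at hu
  obtain ⟨ε₀, hε₀pos, hε₀⟩ := hu
  refine ⟨ε₀, hε₀pos, ?_⟩
  intro ε hε hεlt x hx
  have hmem : ε ∈ Metric.ball (0:ℝ) ε₀ := by
    simp [Real.dist_eq, abs_of_pos hε, hεlt]
  have hclose : |m ε x - 1| < δ := by
    have := hε₀ ⟨hmem, hε⟩ x hx
    rw [Real.dist_eq] at this
    rw [abs_sub_comm]
    exact this
  -- V bounds
  have hcomp : IsCompact (V '' Icc (0:ℝ) 1) := (isCompact_Icc).image_of_continuousOn hV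
  have hne : (V '' Icc (0:ℝ) 1).Nonempty := ⟨V x₀, ⟨x₀, hx₀, rfl⟩⟩
  set S := sSup (V '' Icc (0:ℝ) 1)
  set I := sInf (V '' Icc (0:ℝ) 1)
  have hVx : V x ≤ S := le_csSup hcomp.bddAbove ⟨x, hx, rfl⟩
  have hVx₀ : I ≤ V x₀ := csInf_le hcomp.bddBelow ⟨x₀, hx₀, rfl⟩
  have hVdiff : |V x - V x₀| ≤ S - I := by
    have h1 : V x₀ ≤ S := le_csSup hcomp.bddAbove ⟨x₀, hx₀, rfl⟩
    have h2 : I ≤ V x := csInf_le hcomp.bddBelow ⟨x, hx, rfl⟩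
    rw [abs_le]; constructor <;> linarith
  -- key estimate
  have hgeq : g (m ε x) - g 1 = ε * (V x - V x₀) := by
    have := heq ε hε x hx; rw [this]; ring
  have hlo : |g (m ε x) - g 1 - L * (m ε x - 1)| ≤ |L|/2 * |m ε x - 1| := by
    have := hδ (y := m ε x) (by rw [Real.dist_eq]; exact hclose)
    simpa [Real.norm_eq_abs, mul_comm] using this
  have key : |L| * |m ε x - 1| ≤ ε * (S - I) + |L|/2 * |m ε x - 1| := by
    have h1 : |L * (m ε x - 1)| ≤ |g (m ε x) - g 1| + |L|/2 * |m ε x - 1| := by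
      have h0 := abs_sub (g (m ε x) - g 1) (g (m ε x) - g 1 - L * (m ε x - 1))
      have he : g (m ε x) - g 1 - (g (m ε x) - g 1 - L * (m ε x - 1))
          = L * (m ε x - 1) := by ring
      rw [he] at h0
      linarith [hlo]
    have h2 : |g (m ε x) - g 1| ≤ ε * (S - I) := by
      rw [hgeq, abs_mul, abs_of_pos hε]
      exact mul_le_mul_of_nonneg_left hVdiff hε.le
    rw [abs_mul] at h1
    linarith
  have : |L|/2 * |m ε x - 1| ≤ ε * (S - I) := by linarith
  rw [div_mul_eq_mul_div, le_div_iff₀ hLpos]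
  nlinarith [abs_nonneg (m ε x - 1)]
end

section
/- Suppose u : [0,1] → ℝ is piecewise C¹ and semiconcave (every jump of u' satisfies u'(x⁻) ≥ u'(x⁺)), m is a probability density, j ≠ 0, m(x)(u'(x)+p) = j a.e., and at every x the value m(x) lies in {m⁻(x), m⁺(x)} with continuous functions m⁻, m⁺ satisfying inf_x (m⁺(x) − m⁻(x)) > 0 and m⁻ < 1 < m⁺ pointwise. If there exists a point e where m jumps from m⁺ (on the left) to m⁻ (on the right), then u' has a negative jump at e when j > 0, contradicting semiconcavity; hence no such regular solution can have such a transition point. -/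
open Set

theorem stmt_12 (j p : ℝ) (hj : 0 < j)
    (mm mp : ℝ → ℝ) (hmm_cont : ContinuousOn mm (Set.Icc 0 1))
    (hmp_cont : ContinuousOn mp (Set.Icc 0 1))
    (hmm_pos : ∀ x ∈ Set.Icc (0 : ℝ) 1, 0 < mm x)
    (hmm_lt : ∀ x ∈ Set.Icc (0 : ℝ) 1, mm x < 1)
    (hmp_gt : ∀ x ∈ Set.Icc (0 : ℝ) 1, 1 < mp x)
    (hgap : ∃ δ > (0 : ℝ), ∀ x ∈ Set.Icc (0 : ℝ) 1, δ ≤ mp x - mm x)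
    (e : ℝ) (he : e ∈ Set.Icc (0 : ℝ) 1)
    (uL uR : ℝ)
    (huL : uL = j / mp e - p)  -- left limit of u' at e: m jumps from m⁺ on the left
    (huR : uR = j / mm e - p)  -- right limit of u' at e: to m⁻ on the right
    (hsemiconcave : uR ≤ uL) :
    (uL - uR = j * (1 / mp e - 1 / mm e) ∧ uL - uR < 0) ∧ False := by
  have hmmE := hmm_pos e he
  have hmmL := hmm_lt e he
  have hmpE := hmp_gt e he
  have hmp0 : (0:ℝ) < mp e := lt_trans one_pos hmpE
  have heq : uL - uR = j * (1 / mp e - 1 / mm e) := by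
    rw [huL, huR]; field_simp; ring
  have hinv : 1 / mp e < 1 / mm e := by
    apply one_div_lt_one_div_of_lt hmmE
    linarith
  have hneg : uL - uR < 0 := by
    rw [heq]
    exact mul_neg_of_pos_of_neg hj (by linarith)
  exact ⟨⟨heq, hneg⟩, by linarith⟩
end

section
/- Suppose u : [0,1] → ℝ is Lipschitz, p ∈ ℝ, m is a probability density with ∫₀¹ m = 1, the equation (u'+p)²/2 + εV = g(m) + H̄ holds a.e., m·(u'+p) = 0 a.e., and H̄ = ε∫₀¹ V − ∫₀¹ g(m(x)) dx. Then u' + p = 0 almost everywhere; and if additionally u is 1-periodic (u(0) = u(1)), then p = 0 and u is constant. -/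
open Set MeasureTheory intervalIntegral

theorem stmt_18 (ε : ℝ) (hε : 0 ≤ ε)
    (V : ℝ → ℝ) (hV : ContinuousOn V (Set.Icc 0 1))
    (g : ℝ → ℝ) (hg : Continuous g)
    (p H : ℝ) (u m : ℝ → ℝ) (L : NNReal)
    (hu : LipschitzOnWith L u (Set.Icc 0 1))
    (heq : ∀ᵐ x ∂(MeasureTheory.volume.restrict (Set.Icc (0 : ℝ) 1)),
      (deriv u x + p) ^ 2 / 2 + ε * V x = g (m x) + H)
    (hm0 : ∀ᵐ x ∂(MeasureTheory.volume.restrict (Set.Icc (0 : ℝ) 1)),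
      m x * (deriv u x + p) = 0)
    (hm_nonneg : ∀ x ∈ Set.Icc (0 : ℝ) 1, 0 ≤ m x)
    (hm_one : (∫ x in (0 : ℝ)..1, m x) = 1)
    (hgm_int : IntervalIntegrable (fun x => g (m x)) MeasureTheory.volume 0 1)
    (hH : H = ε * (∫ x in (0 : ℝ)..1, V x) - ∫ x in (0 : ℝ)..1, g (m x)) :
    (∀ᵐ x ∂(MeasureTheory.volume.restrict (Set.Icc (0 : ℝ) 1)), deriv u x + p = 0) ∧
    (u 0 = u 1 → p = 0 ∧ ∀ x ∈ Set.Icc (0 : ℝ) 1, u x = u 0) := by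
  have hIcc : (volume.restrict (Set.Icc (0:ℝ) 1)) = volume.restrict (Set.Ioc (0:ℝ) 1) :=
    (Measure.restrict_congr_set Ioc_ae_eq_Icc).symm
  set f : ℝ → ℝ := fun x => (deriv u x + p)^2/2 with hfdef
  have hVint : IntervalIntegrable V volume 0 1 := by
    apply ContinuousOn.intervalIntegrable; rwa [uIcc_of_le zero_le_one]
  have hh_int : IntervalIntegrable (fun x => g (m x) + H - ε * V x) volume 0 1 :=
    (hgm_int.add intervalIntegrable_const).sub (hVint.const_mul ε)
  have hint0 : (∫ x in (0:ℝ)..1, (g (m x) + H - ε * V x)) = 0 := by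
    rw [intervalIntegral.integral_sub (hgm_int.add intervalIntegrable_const) (hVint.const_mul ε),
        intervalIntegral.integral_add hgm_int intervalIntegrable_const,
        intervalIntegral.integral_const, intervalIntegral.integral_const_mul]
    simp only [sub_zero, one_smul]
    rw [hH]; ring
  have hfh : f =ᵐ[volume.restrict (Set.Ioc (0:ℝ) 1)] fun x => g (m x) + H - ε * V x := by
    rw [← hIcc]
    filter_upwards [heq] with x hx
    simp only [hfdef]; linarith
  have hh_intOn : IntegrableOn (fun x => g (m x) + H - ε * V x) (Set.Ioc (0:ℝ) 1) volume :=
    (intervalIntegrable_iff_integrableOn_Ioc_of_le zero_le_one).mp hh_int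
  have hf_intOn : IntegrableOn f (Set.Ioc (0:ℝ) 1) volume := hh_intOn.congr hfh.symm
  have hf_integral : ∫ x in Set.Ioc (0:ℝ) 1, f x = 0 := by
    rw [integral_congr_ae hfh, ← intervalIntegral.integral_of_le zero_le_one]
    exact hint0
  have hf0 : f =ᵐ[volume.restrict (Set.Ioc (0:ℝ) 1)] 0 :=
    (integral_eq_zero_iff_of_nonneg (fun x => by positivity) hf_intOn).mp hf_integral
  have key : ∀ᵐ x ∂(volume.restrict (Set.Icc (0:ℝ) 1)), deriv u x + p = 0 := by
    rw [hIcc]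
    filter_upwards [hf0] with x hx
    have h2 : (deriv u x + p)^2/2 = 0 := hx
    have h3 : (deriv u x + p)^2 = 0 := by linarith
    exact pow_eq_zero_iff two_ne_zero |>.mp h3
  refine ⟨key, fun hper => ?_⟩
  -- Part 2
  set K : ℝ := (L : ℝ) + |p| with hKdef
  have hK0 : 0 ≤ K := add_nonneg L.coe_nonneg (abs_nonneg p)
  set M : ℝ := (L : ℝ) + p + K with hMdef
  have hM0 : 0 ≤ M := by
    have := neg_abs_le p
    have := L.coe_nonneg
    simp only [hMdef, hKdef]; linarith
  set c : ℝ → ℝ := fun x => max 0 (min x 1) with hcdef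
  have hcmem : ∀ x, c x ∈ Set.Icc (0:ℝ) 1 :=
    fun x => ⟨le_max_left _ _, max_le zero_le_one (min_le_right _ _)⟩
  have hcmono : Monotone c := fun x y h => max_le_max le_rfl (min_le_min h le_rfl)
  have hccont : Continuous c := continuous_const.max (continuous_id.min continuous_const)
  have hcid : ∀ x ∈ Set.Icc (0:ℝ) 1, c x = x := by
    intro x hx
    simp only [hcdef]
    rw [min_eq_left hx.2, max_eq_right hx.1]
  have hlip : ∀ x y : ℝ, x ≤ y → |u (c y) - u (c x)| ≤ L * (c y - c x) := by
    intro x y hxy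
    have := hu.dist_le_mul (c y) (hcmem y) (c x) (hcmem x)
    rw [Real.dist_eq, Real.dist_eq, abs_of_nonneg (sub_nonneg.2 (hcmono hxy))] at this
    exact this
  set φ : ℝ → ℝ := fun x => u (c x) + (p + K) * c x with hφdef
  have hφmono : Monotone φ := by
    intro x y hxy
    have h1 := (abs_le.1 (hlip x y hxy)).1
    have h2 := neg_abs_le p
    have h3 := sub_nonneg.2 (hcmono hxy)
    have e1 : (p + K) * c y - (p + K) * c x = (p + K) * (c y - c x) := by ring
    have e2 : (p + K) * (c y - c x) - (L : ℝ) * (c y - c x)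
        = (p + |p|) * (c y - c x) := by rw [hKdef]; ring
    have e3 : 0 ≤ (p + |p|) * (c y - c x) :=
      mul_nonneg (by linarith) h3
    simp only [hφdef]
    linarith
  have hφup : ∀ x y : ℝ, x ≤ y → φ y - φ x ≤ M * (c y - c x) := by
    intro x y hxy
    have h1 := (abs_le.1 (hlip x y hxy)).2
    have e1 : (p + K) * c y - (p + K) * c x = (p + K) * (c y - c x) := by ring
    have e2 : M * (c y - c x) = (L : ℝ) * (c y - c x) + (p + K) * (c y - c x) := by
      rw [hMdef]; ring
    simp only [hφdef]
    linarith
  have hψmono : Monotone (fun x => M * c x - φ x) := by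
    intro x y hxy
    have h1 := hφup x y hxy
    have e : M * (c y - c x) = M * c y - M * c x := by ring
    simp only
    linarith
  have hCmono : Monotone (fun x => M * c x) := fun x y h =>
    mul_le_mul_of_nonneg_left (hcmono h) hM0
  have hφcont : Continuous φ :=
    (hu.continuousOn.comp_continuous hccont hcmem).add (continuous_const.mul hccont)
  have hψcont : Continuous (fun x => M * c x - φ x) :=
    (continuous_const.mul hccont).sub hφcont
  have hCcont : Continuous (fun x => M * c x) := continuous_const.mul hccont
  have hrl : ∀ (F : ℝ → ℝ), Continuous F → ∀ (hF : Monotone F) (x : ℝ),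
      hF.stieltjesFunction x = F x := by
    intro F hFc hF x
    rw [hF.stieltjesFunction_eq]
    have hne : (nhdsWithin x (Set.Ioi x)).NeBot := inferInstance
    exact rightLim_eq_of_tendsto
      ((hFc.tendsto x).mono_left nhdsWithin_le_nhds)
  set μF := hφmono.stieltjesFunction.measure with hμFdef
  -- the measure of the sum
  have hsum : hφmono.stieltjesFunction + hψmono.stieltjesFunction
      = hCmono.stieltjesFunction := by
    apply StieltjesFunction.ext
    intro x
    rw [StieltjesFunction.add_apply, hrl _ hφcont, hrl _ hψcont, hrl _ hCcont]
    ring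
  have hCmeas : hCmono.stieltjesFunction.measure
      = (ENNReal.ofReal M) • volume.restrict (Set.Ioc (0:ℝ) 1) := by
    refine Measure.ext_of_Ioc _ _ (fun a b hab => ?_)
    rw [StieltjesFunction.measure_Ioc, hrl _ hCcont, hrl _ hCcont,
      Measure.smul_apply, Measure.restrict_apply' measurableSet_Ioc]
    have hseteq : Set.Ioc a b ∩ Set.Ioc (0:ℝ) 1 = Set.Ioc (max 0 a) (min b 1) := by
      ext z
      simp only [Set.mem_inter_iff, Set.mem_Ioc, max_lt_iff, le_min_iff]
      constructor
      · rintro ⟨⟨h1, h2⟩, h3, h4⟩; exact ⟨⟨h3, h1⟩, h2, h4⟩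
      · rintro ⟨⟨h1, h2⟩, h3, h4⟩; exact ⟨⟨h2, h3⟩, h1, h4⟩
    rw [hseteq, Real.volume_Ioc, smul_eq_mul]
    by_cases hcase : max 0 a < min b 1
    · have ha1 : a ≤ 1 := le_of_lt (lt_of_le_of_lt (le_max_right 0 a) (hcase.trans_le (min_le_right b 1)))
      have hb0 : 0 ≤ min b 1 := le_of_lt (lt_of_le_of_lt (le_max_left 0 a) hcase)
      have hca : c a = max 0 a := by simp only [hcdef]; rw [min_eq_left ha1]
      have hcb : c b = min b 1 := by simp only [hcdef]; rw [max_eq_right hb0]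
      rw [hca, hcb, ← ENNReal.ofReal_mul hM0]
      congr 1
      ring
    · push_neg at hcase
      have hcb : c b ≤ c a := by
        rcases le_total a 1 with ha1 | ha1
        · have hca : c a = max 0 a := by simp only [hcdef]; rw [min_eq_left ha1]
          rw [hca]
          exact max_le (le_max_left 0 a) hcase
        · have hca : c a = 1 := by
            simp only [hcdef]; rw [min_eq_right ha1, max_eq_right zero_le_one]
          rw [hca]
          exact (hcmem b).2
      have h1 : M * c b - M * c a ≤ 0 :=
        sub_nonpos.2 (mul_le_mul_of_nonneg_left hcb hM0)
      rw [ENNReal.ofReal_of_nonpos h1,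
        ENNReal.ofReal_of_nonpos (sub_nonpos.2 hcase), mul_zero]
  have hac : μF ≪ volume := by
    intro s hs
    have hle : μF s ≤ hCmono.stieltjesFunction.measure s := by
      rw [← hsum, StieltjesFunction.measure_add, Measure.add_apply]
      exact le_self_add
    have h0 : hCmono.stieltjesFunction.measure s = 0 := by
      rw [hCmeas, Measure.smul_apply, smul_eq_mul]
      have : (volume.restrict (Set.Ioc (0:ℝ) 1)) s = 0 := by
        rw [Measure.restrict_apply' measurableSet_Ioc]
        exact le_antisymm (hs ▸ measure_mono Set.inter_subset_left) (zero_le)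
      rw [this, mul_zero]
    exact le_antisymm (hle.trans h0.le) (zero_le)
  have hwd : volume.withDensity (μF.rnDeriv volume) = μF :=
    Measure.withDensity_rnDeriv_eq _ _ hac
  have hder := hφmono.ae_hasDerivAt
  have hae2 : ∀ᵐ x ∂(volume.restrict (Set.Ioo (0:ℝ) 1)),
      (μF.rnDeriv volume x).toReal = K := by
    have h1 : ∀ᵐ x ∂(volume.restrict (Set.Ioo (0:ℝ) 1)), deriv u x + p = 0 :=
      ae_restrict_of_ae_restrict_of_subset Set.Ioo_subset_Icc_self key
    filter_upwards [h1, ae_restrict_of_ae hder, ae_restrict_mem measurableSet_Ioo]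
      with x hx hdx hmem
    have hev : φ =ᶠ[nhds x] fun y => u y + (p + K) * y := by
      filter_upwards [Ioo_mem_nhds hmem.1 hmem.2] with y hy
      simp only [hφdef, hcid y (Set.Ioo_subset_Icc_self hy)]
    have hdx' : HasDerivAt (fun y => u y + (p+K)*y)
        ((μF.rnDeriv volume x).toReal) x := hdx.congr_of_eventuallyEq hev.symm
    have hlin : HasDerivAt (fun y : ℝ => (p+K)*y) (p+K) x := by
      simpa using (hasDerivAt_id x).const_mul (p+K)
    have hu' : HasDerivAt u ((μF.rnDeriv volume x).toReal - (p+K)) x := by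
      have := hdx'.sub hlin
      exact this.congr_of_eventuallyEq (Filter.Eventually.of_forall fun y => by simp)
    have hd : deriv u x = (μF.rnDeriv volume x).toReal - (p+K) := hu'.deriv
    rw [hd] at hx
    linarith
  have hae3 : ∀ᵐ x ∂(volume.restrict (Set.Ioo (0:ℝ) 1)),
      μF.rnDeriv volume x = ENNReal.ofReal K := by
    filter_upwards [hae2, ae_restrict_of_ae (Measure.rnDeriv_lt_top μF volume)]
      with x h1 h2
    rw [← h1, ENNReal.ofReal_toReal h2.ne]
  have main : ∀ x ∈ Set.Icc (0:ℝ) 1, u x + p * x = u 0 := by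
    intro x hx
    have hsub : ∀ᵐ y ∂(volume.restrict (Set.Ioc (0:ℝ) x)),
        μF.rnDeriv volume y = ENNReal.ofReal K := by
      have hIoo : volume.restrict (Set.Ioo (0:ℝ) 1) = volume.restrict (Set.Ioc (0:ℝ) 1) :=
        Measure.restrict_congr_set Ioo_ae_eq_Ioc
      have h := hae3
      rw [hIoo] at h
      exact ae_restrict_of_ae_restrict_of_subset (Set.Ioc_subset_Ioc_right hx.2) h
    have hφx : φ x = u x + (p + K) * x := by
      simp only [hφdef, hcid x hx]
    have hφ0 : φ 0 = u 0 := by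
      have h0 : c 0 = 0 := hcid 0 ⟨le_rfl, zero_le_one⟩
      simp only [hφdef, h0, mul_zero, add_zero]
    have hμ1 : μF (Set.Ioc 0 x) = ENNReal.ofReal (φ x - φ 0) := by
      rw [hμFdef, StieltjesFunction.measure_Ioc, hrl _ hφcont, hrl _ hφcont]
    have hμ2 : μF (Set.Ioc 0 x) = ENNReal.ofReal (K * x) := by
      rw [← hwd, withDensity_apply _ measurableSet_Ioc]
      calc ∫⁻ y in Set.Ioc (0:ℝ) x, μF.rnDeriv volume y
          = ∫⁻ _ in Set.Ioc (0:ℝ) x, ENNReal.ofReal K := lintegral_congr_ae hsub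
        _ = ENNReal.ofReal K * volume (Set.Ioc (0:ℝ) x) := setLIntegral_const _ _
        _ = ENNReal.ofReal K * ENNReal.ofReal (x - 0) := by rw [Real.volume_Ioc]
        _ = ENNReal.ofReal (K * x) := by
            rw [← ENNReal.ofReal_mul hK0, sub_zero]
    have heq2 : φ x - φ 0 = K * x := by
      have h1 : (0:ℝ) ≤ φ x - φ 0 := sub_nonneg.2 (hφmono hx.1)
      have h2 : 0 ≤ K * x := mul_nonneg hK0 hx.1
      exact (ENNReal.ofReal_eq_ofReal_iff h1 h2).mp (hμ1.symm.trans hμ2)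
    rw [hφx, hφ0] at heq2
    linarith
  have h1 := main 1 ⟨zero_le_one, le_rfl⟩
  have hp : p = 0 := by rw [← hper] at h1; linarith
  refine ⟨hp, fun x hx => ?_⟩
  have h2 := main x hx
  rw [hp] at h2
  linarith
end
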